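/- Under the separation condition that within-cluster pairwise distances are all $< \delta/2$ and between-cluster pairwise distances are all $> \delta/2$ (for some $\delta > 0$) on $N$ points partitioned into $\kappa \ge 2$ nonempty ground-truth clusters, the farthest-point clustering procedure — choosing $(c_1, c_2)$ as the pair maximizing pairwise distance, iteratively choosing $c_k$ maximizing the minimum distance to previously chosen centers, and assigning each remaining point to the nearest center — outputs exactly the ground-truth partition: the $\kappa$ chosen centers lie in $\kappa$ distinct ground-truth clusters, and each point is assigned to the center of its own cluster. -/

import Mathlib

/-- Correctness of farthest-point clustering under the separation condition: if all
within-cluster distances are `< δ/2` and all between-cluster distances are `> δ/2`,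
then the centers `c 0, …, c (κ-1)` chosen by the procedure (first two maximizing the
pairwise distance, each next one maximizing the minimum distance to previous centers)
lie in `κ` distinct ground-truth clusters, and the nearest-center assignment `f`
recovers the ground-truth partition: each point is assigned to the center of its own
cluster. -/
theorem stmt17 (κ N : ℕ) (hκ : 2 ≤ κ)
    (dhat : Fin N → Fin N → ℝ) (hsymm : ∀ i j, dhat i j = dhat j i)
    (ℓ : Fin N → Fin κ) (hsurj : Function.Surjective ℓ)
    (δ : ℝ) (hδ : 0 < δ)
    (hwithin : ∀ i j : Fin N, ℓ i = ℓ j → dhat i j < δ / 2)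
    (hbetween : ∀ i j : Fin N, ℓ i ≠ ℓ j → δ / 2 < dhat i j)
    (c : Fin κ → Fin N)
    -- `(c 0, c 1)` maximizes the pairwise distance
    (hc01 : ∀ i j : Fin N, dhat i j ≤ dhat (c ⟨0, by omega⟩) (c ⟨1, by omega⟩))
    -- each further center maximizes the minimum distance to the previous centers
    (hck : ∀ k : Fin κ, 2 ≤ (k : ℕ) → ∀ i : Fin N,
      (⨅ j : {j : Fin κ // j < k}, dhat i (c j)) ≤
        ⨅ j : {j : Fin κ // j < k}, dhat (c k) (c j))
    -- each point is assigned to its nearest center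
    (f : Fin N → Fin κ)
    (hf : ∀ (i : Fin N) (k : Fin κ), dhat i (c (f i)) ≤ dhat i (c k)) :
    Function.Injective (fun k => ℓ (c k)) ∧ ∀ i : Fin N, ℓ (c (f i)) = ℓ i := by
  -- pairwise distinctness of cluster labels of centers
  have hdist : ∀ k1 k2 : Fin κ, k1 < k2 → ℓ (c k1) ≠ ℓ (c k2) := by
    intro k1 k2 hlt
    by_cases h2 : 2 ≤ (k2 : ℕ)
    · -- find a cluster not covered by the centers before k2
      set S : Finset (Fin κ) := (Finset.Iio k2).image (fun j => ℓ (c j)) with hS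
      have hScard : S.card < κ := by
        calc S.card ≤ (Finset.Iio k2).card := Finset.card_image_le
        _ = (k2 : ℕ) := Fin.card_Iio k2
        _ < κ := k2.isLt
      have hex : ∃ m : Fin κ, m ∉ S := by
        by_contra h
        push_neg at h
        have : (Finset.univ : Finset (Fin κ)).card ≤ S.card :=
          Finset.card_le_card (fun m _ => h m)
        simp [Fintype.card_fin] at this
        omega
      obtain ⟨m, hm⟩ := hex
      obtain ⟨i, hi⟩ := hsurj m
      have hifar : ∀ j : Fin κ, j < k2 → δ / 2 < dhat i (c j) := by
        intro j hj
        apply hbetween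
        intro heq
        exact hm (Finset.mem_image.2 ⟨j, Finset.mem_Iio.2 hj, by rw [← heq, hi]⟩)
      have hne : Nonempty {j : Fin κ // j < k2} :=
        ⟨⟨⟨0, by omega⟩, by simp only [Fin.lt_def]; omega⟩⟩
      obtain ⟨j0, hj0⟩ := Finite.exists_min (fun j : {j : Fin κ // j < k2} => dhat i (c j))
      have h1 : δ / 2 < ⨅ j : {j : Fin κ // j < k2}, dhat i (c j) :=
        lt_of_lt_of_le (hifar j0 j0.2) (le_ciInf hj0)
      have h2' : (⨅ j : {j : Fin κ // j < k2}, dhat i (c j)) ≤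
          ⨅ j : {j : Fin κ // j < k2}, dhat (c k2) (c j) := hck k2 h2 i
      have h3 : (⨅ j : {j : Fin κ // j < k2}, dhat (c k2) (c j)) ≤ dhat (c k2) (c k1) :=
        ciInf_le (Set.Finite.bddBelow (Set.finite_range _)) (⟨k1, hlt⟩ : {j : Fin κ // j < k2})
      intro heq
      have := hwithin (c k2) (c k1) heq.symm
      linarith
    · -- k1 = 0, k2 = 1
      have hk1 : (k1 : ℕ) = 0 := by
        have := Fin.lt_def.mp hlt; omega
      have hk2 : (k2 : ℕ) = 1 := by
        have := Fin.lt_def.mp hlt; omega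
      obtain ⟨i, hi⟩ := hsurj ⟨0, by omega⟩
      obtain ⟨j, hj⟩ := hsurj ⟨1, by omega⟩
      have hij : ℓ i ≠ ℓ j := by
        rw [hi, hj]; intro h; exact absurd (Fin.val_eq_of_eq h) (by simp)
      have h1 : δ / 2 < dhat i j := hbetween i j hij
      have h2 : dhat i j ≤ dhat (c ⟨0, by omega⟩) (c ⟨1, by omega⟩) := hc01 i j
      have e1 : k1 = ⟨0, by omega⟩ := Fin.ext hk1
      have e2 : k2 = ⟨1, by omega⟩ := Fin.ext hk2
      rw [e1, e2]
      intro heq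
      have := hwithin (c ⟨0, by omega⟩) (c ⟨1, by omega⟩) heq
      linarith
  have hinj : Function.Injective (fun k => ℓ (c k)) := by
    intro k1 k2 h
    by_contra hne
    rcases lt_or_gt_of_ne hne with h' | h'
    · exact hdist k1 k2 h' h
    · exact hdist k2 k1 h' h.symm
  refine ⟨hinj, fun i => ?_⟩
  have hsurj2 : Function.Surjective (fun k => ℓ (c k)) :=
    Finite.surjective_of_injective hinj
  obtain ⟨k, hk⟩ := hsurj2 (ℓ i)
  have h1 : dhat i (c k) < δ / 2 := hwithin i (c k) (by simpa using hk.symm)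
  have h2 : dhat i (c (f i)) < δ / 2 := lt_of_le_of_lt (hf i k) h1
  by_contra h
  have := hbetween i (c (f i)) (fun he => h (he ▸ rfl))
  linarith
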